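/- arXiv:1701.03847 — 3 statements merged into one kernel-verified Lean document; each statement's English description precedes it below -/
import Mathlib

section
/- Let n ≥ 2 and a ∈ ℂ with Re(a) ≠ 0. Then g(z) = a z^n + z − conj(z) and g̃(z) = sign(Re(a)) z^n + z − conj(z) have the same Poincaré index at the origin. -/
open Complex Set

/-- `WindingOn f z0 r m` : the winding of `f` along the positively oriented circle of
radius `r` centered at `z0` equals `m`, expressed via a continuous branch of the argument. -/
def WindingOn (f : ℂ → ℂ) (z0 : ℂ) (r : ℝ) (m : ℤ) : Prop :=
  ∃ θ : ℝ → ℝ, ContinuousOn θ (Set.Icc 0 (2 * Real.pi)) ∧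
    (∀ t ∈ Set.Icc 0 (2 * Real.pi),
      f (z0 + r * Complex.exp (Complex.I * t)) =
        (‖f (z0 + r * Complex.exp (Complex.I * t))‖ : ℂ) *
          Complex.exp (Complex.I * (θ t : ℝ))) ∧
    θ (2 * Real.pi) - θ 0 = 2 * Real.pi * m

/-- The Poincaré index of `f` at `z0` is `m`: the winding along all sufficiently
small circles around `z0` equals `m`. -/
def HasIndex (f : ℂ → ℂ) (z0 : ℂ) (m : ℤ) : Prop :=
  ∃ r0 > 0, ∀ r : ℝ, 0 < r → r < r0 → WindingOn f z0 r m

lemma pow_diff_bound (n : ℕ) (R : ℝ) (hR : 0 ≤ R) (z w : ℂ)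
    (hz : ‖z‖ ≤ R) (hw : ‖w‖ ≤ R) :
    ‖(z ^ n - w ^ n)‖ ≤ n * R ^ (n - 1) * ‖(z - w)‖ := by
  induction n with
  | zero => simp
  | succ k ih =>
    have hsplit : z ^ (k+1) - w ^ (k+1) = z ^ k * (z - w) + (z ^ k - w ^ k) * w := by ring
    have h1 : ‖(z ^ k * (z - w))‖ ≤ R ^ k * ‖(z - w)‖ := by
      rw [norm_mul, norm_pow]; gcongr
    have h2 : ‖((z ^ k - w ^ k) * w)‖ ≤ (k * R ^ (k-1) * ‖(z - w)‖) * R := by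
      rw [norm_mul]
      gcongr
    have h3 : (k:ℝ) * R ^ (k-1) * R ≤ k * R ^ k := by
      match k with
      | 0 => simp
      | (j+1) => simp only [Nat.add_sub_cancel, pow_succ, Nat.cast_add, Nat.cast_one]; ring_nf; exact le_rfl
    calc ‖(z ^ (k+1) - w ^ (k+1))‖
        ≤ ‖(z ^ k * (z - w))‖ + ‖((z ^ k - w ^ k) * w)‖ := by
          rw [hsplit]; exact norm_add_le _ _
      _ ≤ R ^ k * ‖(z - w)‖ + (k * R ^ (k-1) * ‖(z - w)‖) * R :=
          add_le_add h1 h2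
      _ ≤ (↑(k+1)) * R ^ (k+1-1) * ‖(z - w)‖ := by
          simp only [Nat.add_sub_cancel]
          push_cast
          nlinarith [norm_nonneg (z - w), h3]

set_option maxHeartbeats 1000000 in
lemma nonvanish (n : ℕ) (hn : 2 ≤ n) (ε M : ℝ) (hε : 0 < ε) (hεM : ε ≤ M) :
    ∃ r0 : ℝ, 0 < r0 ∧ ∀ r : ℝ, 0 < r → r < r0 → ∀ c : ℂ, ε ≤ |c.re| → ‖c‖ ≤ M →
      ∀ z : ℂ, ‖z‖ = r → c * z ^ n + z - (starRingEnd ℂ) z ≠ 0 := by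
  have hM : 0 < M := lt_of_lt_of_le hε hεM
  obtain ⟨k, rfl⟩ : ∃ k, n = k + 1 := ⟨n - 1, by omega⟩
  have hk : 1 ≤ k := by omega
  refine ⟨min 1 (min (1/M) (ε / (2 ^ k * (k+1) * M ^ 2))), by positivity, ?_⟩
  intro r hr hrlt c hcre hcM z hz heq
  have hr1 : r ≤ 1 := le_of_lt (lt_of_lt_of_le hrlt (min_le_left _ _))
  have hrM : r * M ≤ 1 := by
    have : r < 1 / M := lt_of_lt_of_le hrlt (le_trans (min_le_right _ _) (min_le_left _ _))
    rw [lt_div_iff₀ hM] at this; linarith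
  have hrε : r < ε / (2 ^ k * (k+1) * M ^ 2) :=
    lt_of_lt_of_le hrlt (le_trans (min_le_right _ _) (min_le_right _ _))
  -- from the equation
  have heq2 : c * z ^ (k+1) = -(((2 * z.im : ℝ)) * I) := by
    have := Complex.sub_conj z
    have h' : c * z ^ (k+1) + (z - (starRingEnd ℂ) z) = 0 := by
      rw [← heq]; ring
    rw [this] at h'
    linear_combination h'
  have habs : ‖c‖ * r ^ (k+1) = 2 * |z.im| := by
    have := congrArg norm heq2
    rw [norm_mul, norm_pow, hz, norm_neg, norm_mul, Complex.norm_real, Real.norm_eq_abs, Complex.norm_I,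
      mul_one, abs_mul] at this
    simpa using this
  have hyM : |z.im| ≤ M * r ^ (k+1) / 2 := by
    have h1 : ‖c‖ * r ^ (k+1) ≤ M * r ^ (k+1) := by
      exact mul_le_mul_of_nonneg_right hcM (by positivity)
    linarith [habs]
  have hrk1 : r ^ k ≤ r := by
    calc r ^ k ≤ r ^ 1 := pow_le_pow_of_le_one hr.le hr1 hk
      _ = r := pow_one r
  have hy : |z.im| ≤ r / 2 := by
    have : M * r ^ (k+1) ≤ r := by
      have : r ^ (k+1) = r ^ k * r := pow_succ r k
      rw [this]
      calc M * (r ^ k * r) ≤ M * (r * r) := by gcongr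
        _ = (r * M) * r := by ring
        _ ≤ 1 * r := by nlinarith
        _ = r := one_mul r
    linarith
  have hsq : z.re ^ 2 + z.im ^ 2 = r ^ 2 := by
    have := Complex.sq_norm z
    rw [hz, Complex.normSq_apply] at this
    nlinarith [this]
  have hx : r / 2 ≤ |z.re| := by
    have him2 : z.im ^ 2 ≤ (r/2) ^ 2 := by
      nlinarith [_root_.sq_abs z.im, abs_nonneg z.im]
    have hre2 : (r/2) ^ 2 ≤ |z.re| ^ 2 := by
      nlinarith [_root_.sq_abs z.re]
    calc r/2 = Real.sqrt ((r/2)^2) := (Real.sqrt_sq (by positivity)).symm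
      _ ≤ Real.sqrt (|z.re|^2) := Real.sqrt_le_sqrt hre2
      _ = |z.re| := Real.sqrt_sq (abs_nonneg _)
  have hre0 : (c * z ^ (k+1)).re = 0 := by
    rw [heq2]; simp
  -- bound |c.re * z.re^n| from above
  have hxr : ‖((z.re : ℂ))‖ ≤ r := by
    rw [Complex.norm_real, Real.norm_eq_abs]
    have h2 : z.re ^ 2 ≤ r ^ 2 := by nlinarith [sq_nonneg z.im]
    calc |z.re| = Real.sqrt (z.re^2) := (Real.sqrt_sq_eq_abs _).symm
      _ ≤ Real.sqrt (r^2) := Real.sqrt_le_sqrt h2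
      _ = r := Real.sqrt_sq hr.le
  have hzx : ‖(z - (z.re : ℂ))‖ = |z.im| := by
    have : z - (z.re : ℂ) = (z.im : ℂ) * I := by
      have := Complex.re_add_im z
      linear_combination -this
    rw [this, norm_mul, Complex.norm_real, Real.norm_eq_abs, Complex.norm_I, mul_one]
  have hdiff : ‖(z ^ (k+1) - ((z.re:ℂ)) ^ (k+1))‖ ≤ (k+1) * r ^ k * |z.im| := by
    have := pow_diff_bound (k+1) r hr.le z (z.re : ℂ) (le_of_eq hz) hxr
    simpa [hzx] using this
  have hxre : (c * ((z.re:ℂ)) ^ (k+1)).re = c.re * z.re ^ (k+1) := by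
    simp [Complex.mul_re, ← Complex.ofReal_pow]
  have hupper : |c.re * z.re ^ (k+1)| ≤ M * ((k+1) * r ^ k * |z.im|) := by
    have e1 : (c * ((z.re:ℂ)) ^ (k+1)).re = (c * (((z.re:ℂ)) ^ (k+1) - z ^ (k+1))).re := by
      rw [mul_sub, Complex.sub_re, hre0, sub_zero]
    rw [← hxre, e1]
    calc |(c * (((z.re:ℂ)) ^ (k+1) - z ^ (k+1))).re|
        ≤ ‖(c * (((z.re:ℂ)) ^ (k+1) - z ^ (k+1)))‖ := Complex.abs_re_le_norm _
      _ = ‖c‖ * ‖(z ^ (k+1) - ((z.re:ℂ)) ^ (k+1))‖ := by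
          rw [norm_mul, ← norm_neg (((z.re:ℂ)) ^ (k+1) - z ^ (k+1))]; ring_nf
      _ ≤ M * ((k+1) * r ^ k * |z.im|) := by
          apply mul_le_mul hcM hdiff (norm_nonneg _)
          exact hM.le
  have hlower : ε * (r/2) ^ (k+1) ≤ |c.re * z.re ^ (k+1)| := by
    rw [abs_mul, _root_.abs_pow]
    have h1 : (r/2) ^ (k+1) ≤ |z.re| ^ (k+1) := by
      apply pow_le_pow_left₀ (by positivity) hx
    exact mul_le_mul hcre h1 (by positivity) (abs_nonneg _)
  -- final contradiction
  have hfin : ε * (r/2) ^ (k+1) ≤ M * ((k+1) * r ^ k * (M * r ^ (k+1) / 2)) := by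
    calc ε * (r/2) ^ (k+1) ≤ |c.re * z.re ^ (k+1)| := hlower
      _ ≤ M * ((k+1) * r ^ k * |z.im|) := hupper
      _ ≤ M * ((k+1) * r ^ k * (M * r ^ (k+1) / 2)) := by
          gcongr
  have hrpos : (0:ℝ) < r ^ (k+1) := by positivity
  have hstep : ε / 2 ^ (k+1) ≤ ((k+1) * M ^ 2 / 2) * r ^ k := by
    have e : ε * (r/2) ^ (k+1) = (ε / 2 ^ (k+1)) * r ^ (k+1) := by
      rw [div_pow]; ring
    have e2 : M * ((k+1) * r ^ k * (M * r ^ (k+1) / 2)) =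
        (((k+1) * M ^ 2 / 2) * r ^ k) * r ^ (k+1) := by ring
    rw [e, e2] at hfin
    exact le_of_mul_le_mul_right hfin hrpos
  have hlast : ((k+1) * M ^ 2 / 2) * r ^ k < ε / 2 ^ (k+1) := by
    have h1 : ((k+1) * M ^ 2 / 2) * r ^ k ≤ ((k+1) * M ^ 2 / 2) * r := by
      gcongr
    have h2 : ((k+1) * M ^ 2 / 2) * r < ((k+1) * M ^ 2 / 2) * (ε / (2 ^ k * (k+1) * M ^ 2)) := by
      gcongr
    have h3 : ((k+1):ℝ) * M ^ 2 / 2 * (ε / (2 ^ k * (k+1) * M ^ 2)) = ε / 2 ^ (k+1) := by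
      have hk1 : ((k:ℝ)+1) ≠ 0 := by positivity
      have hM2 : M ^ 2 ≠ 0 := by positivity
      have hD : (2:ℝ) ^ k ≠ 0 := by positivity
      rw [pow_succ]
      field_simp
      ring
    linarith
  linarith

lemma transfer (f h : ℂ → ℂ) (hfc : Continuous f) (hhc : Continuous h) (r : ℝ) (hr : 0 < r)
    (hcond : ∀ z : ℂ, ‖z‖ = r → h z ≠ 0 ∧ f z / h z ∈ Complex.slitPlane)
    (m : ℤ) : WindingOn f 0 r m → WindingOn h 0 r m := by
  rintro ⟨θ, hθc, hθeq, hθd⟩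
  set p : ℝ → ℂ := fun t => 0 + (r:ℂ) * Complex.exp (I * t) with hp
  have hpabs : ∀ t : ℝ, ‖(p t)‖ = r := by
    intro t
    simp [hp, Complex.norm_exp, Complex.norm_real, Real.norm_eq_abs, Complex.mul_re, abs_of_pos hr]
  have hpc : Continuous p := by
    apply continuous_const.add
    exact continuous_const.mul (Complex.continuous_exp.comp
      (continuous_const.mul Complex.continuous_ofReal))
  set q : ℝ → ℂ := fun t => f (p t) / h (p t) with hq
  have hq0 : ∀ t, h (p t) ≠ 0 := fun t => (hcond _ (hpabs t)).1
  have hqs : ∀ t, q t ∈ Complex.slitPlane := fun t => (hcond _ (hpabs t)).2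
  have hqne : ∀ t, q t ≠ 0 := fun t => Complex.slitPlane_ne_zero (hqs t)
  have hqc : Continuous q := ((hfc.comp hpc).div (hhc.comp hpc) hq0)
  set φ : ℝ → ℝ := fun t => (q t).arg with hφ
  have hφc : Continuous φ := continuous_iff_continuousAt.2 fun t =>
    (Complex.continuousAt_arg (hqs t)).comp hqc.continuousAt
  refine ⟨fun t => θ t - φ t, hθc.sub hφc.continuousOn, ?_, ?_⟩
  · intro t ht
    show h (p t) = ((‖(h (p t))‖ : ℝ) : ℂ) * Complex.exp (I * ((θ t - φ t : ℝ) : ℂ))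
    have hA : f (p t) = ((‖(f (p t))‖ : ℝ) : ℂ) * Complex.exp (I * ((θ t : ℝ) : ℂ)) :=
      hθeq t ht
    set A := f (p t) with hA'
    set B := h (p t) with hB'
    have hwB : q t * B = A := div_mul_cancel₀ A (hq0 t)
    have habsA : ‖A‖ = ‖(q t)‖ * ‖B‖ := by
      rw [← hwB, norm_mul]
    have habsw : ‖(q t)‖ ≠ 0 := by
      simpa using hqne t
    have key : ((‖(q t)‖ : ℂ)) * (Complex.exp (↑(φ t) * I) * B) =
        (‖(q t)‖ : ℂ) * ((‖B‖ : ℂ) * Complex.exp (I * ↑(θ t))) := by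
      calc ((‖(q t)‖ : ℂ)) * (Complex.exp (↑(φ t) * I) * B)
          = ((‖(q t)‖ : ℂ) * Complex.exp (↑((q t).arg) * I)) * B := by rw [← mul_assoc]
        _ = q t * B := by rw [Complex.norm_mul_exp_arg_mul_I]
        _ = A := hwB
        _ = (‖A‖ : ℂ) * Complex.exp (I * ↑(θ t)) := hA
        _ = (‖(q t)‖ : ℂ) * ((‖B‖ : ℂ) * Complex.exp (I * ↑(θ t))) := by
            rw [habsA, Complex.ofReal_mul]; ring
    have key2 : Complex.exp (↑(φ t) * I) * B =
        (‖B‖ : ℂ) * Complex.exp (I * ↑(θ t)) :=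
      mul_left_cancel₀ (Complex.ofReal_ne_zero.2 habsw) key
    have hexp : Complex.exp (I * ((θ t - φ t : ℝ) : ℂ)) =
        Complex.exp (I * ↑(θ t)) / Complex.exp (↑(φ t) * I) := by
      rw [← Complex.exp_sub]
      congr 1
      push_cast
      ring
    rw [hexp, ← mul_div_assoc, ← key2, mul_div_cancel_left₀ _ (Complex.exp_ne_zero _)]
  · show θ (2*Real.pi) - φ (2*Real.pi) - (θ 0 - φ 0) = 2 * Real.pi * m
    have hexp1 : Complex.exp (I * ((2*Real.pi : ℝ):ℂ)) = Complex.exp (I * ((0:ℝ):ℂ)) := by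
      rw [show Complex.I * ((2*Real.pi:ℝ):ℂ) = 2*Real.pi*I by push_cast; ring,
        Complex.exp_two_pi_mul_I]
      simp
    have hp2 : p (2*Real.pi) = p 0 := by
      simp only [hp, hexp1]
    have hφeq : φ (2*Real.pi) = φ 0 := by
      simp only [hφ, hq, hp2]
    rw [hφeq]
    linarith [hθd]

lemma cont_field (a : ℂ) (n : ℕ) :
    Continuous (fun z : ℂ => a * z ^ n + z - (starRingEnd ℂ) z) :=
  ((continuous_const.mul (continuous_pow n)).add continuous_id).sub continuous_conj

lemma key (n : ℕ) (hn : 2 ≤ n) (a b : ℂ) (hab : 0 < a.re * b.re) (m : ℤ) :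
    HasIndex (fun z => a * z ^ n + z - (starRingEnd ℂ) z) 0 m →
    HasIndex (fun z => b * z ^ n + z - (starRingEnd ℂ) z) 0 m := by
  have ha : a.re ≠ 0 := by rintro h; rw [h] at hab; simp at hab
  have hb : b.re ≠ 0 := by rintro h; rw [h] at hab; simp at hab
  set ε := min |a.re| |b.re| with hε'
  have hε : 0 < ε := lt_min (abs_pos.2 ha) (abs_pos.2 hb)
  set M := ‖a‖ + ‖b‖ with hM'
  have haM : ‖a‖ ≤ M := le_add_of_nonneg_right (norm_nonneg b)
  have hbM : ‖b‖ ≤ M := le_add_of_nonneg_left (norm_nonneg a)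
  have hεM : ε ≤ M := le_trans (min_le_left _ _)
    (le_trans (Complex.abs_re_le_norm a) haM)
  obtain ⟨r0, hr0, H0⟩ := nonvanish n hn ε M hε hεM
  rintro ⟨r1, hr1, H1⟩
  refine ⟨min r0 r1, lt_min hr0 hr1, ?_⟩
  intro r hr hrlt
  have hrr0 : r < r0 := lt_of_lt_of_le hrlt (min_le_left _ _)
  have hrr1 : r < r1 := lt_of_lt_of_le hrlt (min_le_right _ _)
  apply transfer _ _ (cont_field a n) (cont_field b n) r hr ?_ m (H1 r hr hrr1)
  intro z hz
  have hbz : b * z ^ n + z - (starRingEnd ℂ) z ≠ 0 :=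
    H0 r hr hrr0 b (min_le_right _ _) hbM z hz
  refine ⟨hbz, ?_⟩
  by_contra hmem
  rw [Complex.mem_slitPlane_iff] at hmem
  push_neg at hmem
  obtain ⟨hwre, hwim⟩ := hmem
  set w := (a * z ^ n + z - (starRingEnd ℂ) z) / (b * z ^ n + z - (starRingEnd ℂ) z) with hw'
  have hw : w = ((w.re : ℝ) : ℂ) := by
    apply Complex.ext
    · simp
    · simpa using hwim
  set μ := -w.re with hμ'
  have hμ : 0 ≤ μ := by simp [hμ']; exact hwre
  have h1μ : (0:ℝ) < 1 + μ := by linarith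
  have hA : a * z ^ n + z - (starRingEnd ℂ) z =
      -(μ:ℂ) * (b * z ^ n + z - (starRingEnd ℂ) z) := by
    have := div_mul_cancel₀ (a * z ^ n + z - (starRingEnd ℂ) z) hbz
    rw [← hw'] at this
    rw [← this, hw]
    push_cast [hμ']
    ring
  set c : ℂ := (((1+μ)⁻¹ : ℝ) : ℂ) * (a + (μ:ℂ) * b) with hc'
  have hceq : c * z ^ n + z - (starRingEnd ℂ) z = 0 := by
    have hmul : ((1+μ : ℝ) : ℂ) ≠ 0 := by
      exact_mod_cast h1μ.ne'
    have hcc : ((1+μ : ℝ) : ℂ) * c = a + (μ:ℂ) * b := by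
      rw [hc', ← mul_assoc, ← Complex.ofReal_mul, mul_inv_cancel₀ h1μ.ne']
      simp
    have expand : ((1+μ : ℝ) : ℂ) * (c * z ^ n + z - (starRingEnd ℂ) z) =
        (a * z ^ n + z - (starRingEnd ℂ) z) + (μ:ℂ) * (b * z ^ n + z - (starRingEnd ℂ) z) := by
      calc ((1+μ : ℝ) : ℂ) * (c * z ^ n + z - (starRingEnd ℂ) z)
          = (((1+μ : ℝ) : ℂ) * c) * z ^ n + ((1+μ : ℝ) : ℂ) * (z - (starRingEnd ℂ) z) := by
            push_cast; ring
        _ = (a + (μ:ℂ) * b) * z ^ n + ((1+μ : ℝ) : ℂ) * (z - (starRingEnd ℂ) z) := by rw [hcc]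
        _ = (a * z ^ n + z - (starRingEnd ℂ) z) + (μ:ℂ) * (b * z ^ n + z - (starRingEnd ℂ) z) := by
            push_cast; ring
    rw [hA] at expand
    have : ((1+μ : ℝ) : ℂ) * (c * z ^ n + z - (starRingEnd ℂ) z) = 0 := by
      rw [expand]; ring
    exact (mul_eq_zero.1 this).resolve_left hmul
  have hcre : c.re = (1+μ)⁻¹ * (a.re + μ * b.re) := by
    rw [hc', Complex.re_ofReal_mul, Complex.add_re, Complex.re_ofReal_mul]
  have hcreb : ε ≤ |c.re| := by
    rcases mul_pos_iff.1 hab with ⟨hap, hbp⟩ | ⟨han, hbn⟩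
    · have hεa : ε ≤ a.re := le_trans (min_le_left _ _) (le_of_eq (abs_of_pos hap))
      have hεb : ε ≤ b.re := le_trans (min_le_right _ _) (le_of_eq (abs_of_pos hbp))
      have : ε ≤ c.re := by
        rw [hcre]
        calc ε = (1+μ)⁻¹ * (ε * (1+μ)) := by field_simp
          _ ≤ (1+μ)⁻¹ * (a.re + μ * b.re) := by
              apply mul_le_mul_of_nonneg_left _ (by positivity)
              nlinarith
      exact le_trans this (le_abs_self _)
    · have hεa : ε ≤ -a.re := le_trans (min_le_left _ _) (le_of_eq (abs_of_neg han))
      have hεb : ε ≤ -b.re := le_trans (min_le_right _ _) (le_of_eq (abs_of_neg hbn))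
      have : ε ≤ -c.re := by
        rw [hcre]
        calc ε = (1+μ)⁻¹ * (ε * (1+μ)) := by field_simp
          _ ≤ (1+μ)⁻¹ * (-(a.re + μ * b.re)) := by
              apply mul_le_mul_of_nonneg_left _ (by positivity)
              nlinarith
          _ = -((1+μ)⁻¹ * (a.re + μ * b.re)) := by ring
      exact le_abs.2 (Or.inr this)
  have hcM : ‖c‖ ≤ M := by
    have h1 : ‖c‖ = (1+μ)⁻¹ * ‖(a + (μ:ℂ) * b)‖ := by
      rw [hc', norm_mul, Complex.norm_real, Real.norm_eq_abs, abs_of_pos (by positivity)]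
    have h2 : ‖(a + (μ:ℂ) * b)‖ ≤ ‖a‖ + μ * ‖b‖ := by
      calc ‖(a + (μ:ℂ) * b)‖ ≤ ‖a‖ + ‖((μ:ℂ) * b)‖ :=
            norm_add_le _ _
        _ = ‖a‖ + μ * ‖b‖ := by
            rw [norm_mul, Complex.norm_real, Real.norm_eq_abs, _root_.abs_of_nonneg hμ]
    rw [h1]
    calc (1+μ)⁻¹ * ‖(a + (μ:ℂ) * b)‖ ≤ (1+μ)⁻¹ * (M * (1+μ)) := by
          apply mul_le_mul_of_nonneg_left _ (by positivity)
          nlinarith [norm_nonneg a, norm_nonneg b]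
      _ = M := by field_simp
  exact H0 r hr hrr0 c hcreb hcM z hz hceq


theorem index_halfplane (n : ℕ) (hn : 2 ≤ n) (a : ℂ) (hre : a.re ≠ 0)
    (g gt : ℂ → ℂ)
    (hg : ∀ z, g z = a * z ^ n + z - (starRingEnd ℂ) z)
    (hgt : ∀ z, gt z = (Real.sign a.re : ℂ) * z ^ n + z - (starRingEnd ℂ) z) :
    ∀ m : ℤ, HasIndex g 0 m ↔ HasIndex gt 0 m := by
  intro m
  have hgf : g = fun z => a * z ^ n + z - (starRingEnd ℂ) z := funext hg
  have hgtf : gt = fun z => (Real.sign a.re : ℂ) * z ^ n + z - (starRingEnd ℂ) z := funext hgt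
  rw [hgf, hgtf]
  have hb : ((Real.sign a.re : ℂ)).re = Real.sign a.re := Complex.ofReal_re _
  have hprod : 0 < a.re * ((Real.sign a.re : ℂ)).re := by
    rw [hb]
    rcases lt_or_gt_of_ne hre with h | h
    · rw [Real.sign_of_neg h]; nlinarith
    · rw [Real.sign_of_pos h]; nlinarith
  constructor
  · exact key n hn a _ hprod m
  · exact key n hn _ a (by rw [mul_comm] at hprod; exact hprod) m
end

section
/- Let n ≥ 2 and a ∈ ℂ with Re(a) ≠ 0. Then g(z) = a z^{n+2} + z − conj(z) and g̃(z) = a z^n + z − conj(z) have the same Poincaré index at the origin. -/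
open Complex Set

lemma aux_pow_sub_pow_le (z w : ℂ) (r : ℝ) (n : ℕ)
    (hz : ‖z‖ ≤ r) (hw : ‖w‖ ≤ r) :
    ‖z ^ n - w ^ n‖ ≤ n * r ^ (n - 1) * ‖z - w‖ := by
  have hr : 0 ≤ r := le_trans (norm_nonneg z) hz
  rw [← geom_sum₂_mul z w n, norm_mul]
  gcongr
  calc ‖∑ i ∈ Finset.range n, z ^ i * w ^ (n - 1 - i)‖
      ≤ ∑ i ∈ Finset.range n, ‖z ^ i * w ^ (n - 1 - i)‖ :=
        norm_sum_le _ _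
    _ ≤ ∑ _i ∈ Finset.range n, r ^ (n - 1) := by
        apply Finset.sum_le_sum
        intro i hi
        rw [Finset.mem_range] at hi
        rw [norm_mul, norm_pow, norm_pow]
        calc ‖z‖ ^ i * ‖w‖ ^ (n - 1 - i)
            ≤ r ^ i * r ^ (n - 1 - i) := by gcongr
          _ = r ^ (n - 1) := by rw [← pow_add]; congr 1; omega
    _ = n * r ^ (n - 1) := by rw [Finset.sum_const, Finset.card_range, nsmul_eq_mul]

set_option maxHeartbeats 4000000 in
lemma aux_nonvanish (n : ℕ) (hn : 2 ≤ n) (a : ℂ) (hre : a.re ≠ 0) :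
    ∃ r0 : ℝ, 0 < r0 ∧ r0 ≤ 1 ∧ ∀ r : ℝ, 0 < r → r < r0 → ∀ z : ℂ, ‖z‖ = r →
      ∀ s : ℝ, 0 ≤ s → s ≤ 1 →
        a * z ^ n * ((1 - (s : ℂ)) * z ^ 2 + s) + (z - (starRingEnd ℂ) z) ≠ 0 := by
  set ρ : ℝ := |a.re| with hρdef
  set K : ℝ := |a.re| + |a.im| with hKdef
  have hρ : 0 < ρ := abs_pos.mpr hre
  have hK : 0 < K := lt_of_lt_of_le hρ (le_add_of_nonneg_right (abs_nonneg _))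
  have hρK : ρ ≤ K := le_add_of_nonneg_right (abs_nonneg _)
  have hn0 : (0:ℝ) < n := by
    have : (2:ℝ) ≤ n := by exact_mod_cast hn
    linarith
  have hn2 : (2:ℝ) ≤ n := by exact_mod_cast hn
  set ε : ℝ := ρ / (64 * n * K) with hεdef
  have hε : 0 < ε := by positivity
  have hNeq : (n:ℝ) * ε = ρ / (64 * K) := by
    rw [hεdef]; field_simp
  have hN64 : (n:ℝ) * ε ≤ 1 / 64 := by
    rw [hNeq]
    rw [div_le_div_iff₀ (by positivity) (by norm_num)]
    linarith
  have hε1 : ε ≤ 1 / 128 := by nlinarith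
  have hKN : K * ((n:ℝ) * ε) = ρ / 64 := by
    rw [hNeq]; field_simp
  have hKε : K * ε ≤ ρ / 128 := by nlinarith
  have haim : |a.im| ≤ K := by rw [hKdef]; linarith [abs_nonneg a.re]
  have habsaK : ‖a‖ ≤ K := by
    rw [hKdef]; exact Complex.norm_le_abs_re_add_abs_im a
  clear_value ε K ρ
  refine ⟨min 1 (2 * ε / K), by positivity, min_le_left _ _, ?_⟩
  intro r hr hrlt z habsz s hs0 hs1 Heq
  have hr1 : r ≤ 1 := le_of_lt (lt_of_lt_of_le hrlt (min_le_left _ _))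
  have hrε : r ≤ 2 * ε / K := le_of_lt (lt_of_lt_of_le hrlt (min_le_right _ _))
  set x : ℝ := z.re with hxdef
  set y : ℝ := z.im with hydef
  have hxy : x ^ 2 + y ^ 2 = r ^ 2 := by
    have h0 := Complex.sq_norm z
    rw [habsz, Complex.normSq_apply] at h0
    rw [hxdef, hydef]; nlinarith [h0]
  clear_value x y
  set F : ℂ := (1 - (s : ℂ)) * z ^ 2 + s with hFdef
  -- the equation
  have hA : a * z ^ n * F = -((2 * y : ℝ) * Complex.I) := by
    have h1 : z - (starRingEnd ℂ) z = (2 * y : ℝ) * Complex.I := by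
      rw [hydef]; exact Complex.sub_conj z
    have : a * z ^ n * F = -(z - (starRingEnd ℂ) z) := by
      rw [eq_neg_iff_add_eq_zero]; exact Heq
    rw [this, h1]
  have habsA : ‖a * z ^ n * F‖ = |2 * y| := by
    rw [hA, norm_neg, norm_mul, Complex.norm_real, Real.norm_eq_abs, Complex.norm_I, mul_one]
  have hReA : (a * z ^ n * F).re = 0 := by
    rw [hA]
    simp
  -- |F| ≤ 1
  have habsF : ‖F‖ ≤ 1 := by
    calc ‖F‖ ≤ ‖((1 - (s:ℂ)) * z ^ 2)‖ + ‖(s:ℂ)‖ :=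
          norm_add_le _ _
      _ = (1 - s) * r ^ 2 + s := by
          have h1 : (1 - (s:ℂ)) = ((1 - s : ℝ) : ℂ) := by push_cast; ring
          rw [norm_mul, norm_pow, habsz, h1, Complex.norm_real, Real.norm_eq_abs, Complex.norm_real, Real.norm_eq_abs,
            _root_.abs_of_nonneg (by linarith : (0:ℝ) ≤ 1 - s), _root_.abs_of_nonneg hs0]
      _ ≤ 1 := by
          have hr2 : r ^ 2 ≤ 1 := by nlinarith
          nlinarith [mul_le_mul_of_nonneg_left hr2 (by linarith : (0:ℝ) ≤ 1 - s)]
  by_cases hcase : ‖a‖ * r ^ n < 2 * |y|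
  · -- modulus contradiction
    have h1 : ‖a * z ^ n * F‖ ≤ ‖a‖ * r ^ n := by
      rw [norm_mul, norm_mul, norm_pow, habsz]
      calc ‖a‖ * r ^ n * ‖F‖ ≤ ‖a‖ * r ^ n * 1 := by
            apply mul_le_mul_of_nonneg_left habsF (by positivity)
        _ = ‖a‖ * r ^ n := by ring
    rw [habsA] at h1
    have : |2 * y| = 2 * |y| := by rw [abs_mul]; norm_num
    rw [this] at h1
    linarith
  · push_neg at hcase
    -- small |y| case: real part contradiction
    have h2y : 2 * |y| ≤ K * r ^ n := by
      have : |2 * y| = 2 * |y| := by rw [abs_mul]; norm_num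
      calc 2 * |y| ≤ ‖a‖ * r ^ n := hcase
        _ ≤ K * r ^ n := by apply mul_le_mul_of_nonneg_right habsaK (by positivity)
    have hrn2 : r ^ n ≤ r ^ 2 := pow_le_pow_of_le_one hr.le hr1 hn
    have hy : |y| ≤ ε * r := by
      have h3 : K * r ≤ 2 * ε := by
        rw [le_div_iff₀ hK] at hrε
        linarith [hrε]
      nlinarith [pow_pos hr 2, sq_nonneg r]
    have hy0 : 0 ≤ |y| := abs_nonneg y
    have hy2 : y ^ 2 ≤ ε ^ 2 * r ^ 2 := by nlinarith [_root_.sq_abs y]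
    have habsx : |x| ≤ r := by nlinarith [_root_.sq_abs x, abs_nonneg x, sq_nonneg y]
    have hε2 : ε ^ 2 ≤ ε := by nlinarith
    have hcx : r * (1 - ε ^ 2) ≤ |x| := by
      apply le_of_pow_le_pow_left₀ two_ne_zero (abs_nonneg x)
      have h4 : (r * (1 - ε ^ 2)) ^ 2 ≤ r ^ 2 - ε ^ 2 * r ^ 2 := by nlinarith
      calc (r * (1 - ε ^ 2)) ^ 2 ≤ r ^ 2 - ε ^ 2 * r ^ 2 := h4
        _ ≤ x ^ 2 := by nlinarith
        _ = |x| ^ 2 := (_root_.sq_abs x).symm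
    -- bound on |x|^n from below
    have hxn : r ^ n * (1 - (n:ℝ) * ε ^ 2) ≤ |x| ^ n := by
      calc r ^ n * (1 - (n:ℝ) * ε ^ 2) = r ^ n * (1 + (n:ℝ) * (-(ε^2))) := by ring
        _ ≤ r ^ n * (1 + (-(ε^2))) ^ n := by
            apply mul_le_mul_of_nonneg_left _ (by positivity)
            exact one_add_mul_le_pow (by linarith [hε2, hε1] : (-2:ℝ) ≤ -(ε^2)) n
        _ = (r * (1 - ε ^ 2)) ^ n := by rw [mul_pow]; ring_nf
        _ ≤ |x| ^ n :=
            pow_le_pow_left₀ (mul_nonneg hr.le (by linarith [hε2, hε1])) hcx n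
    -- z^n bounds
    have hzx : ‖(z - (x:ℝ))‖ = |y| := by
      have h5 : z - (x:ℝ) = (y:ℝ) * Complex.I := by
        apply Complex.ext <;> simp [hxdef, hydef]
      rw [h5, norm_mul, Complex.norm_real, Real.norm_eq_abs, Complex.norm_I, mul_one]
    have hpow : ‖(z ^ n - ((x:ℝ):ℂ) ^ n)‖ ≤ (n:ℝ) * ε * r ^ n := by
      have h6 := aux_pow_sub_pow_le z ((x:ℝ):ℂ) r n (le_of_eq habsz)
        (by rw [Complex.norm_real, Real.norm_eq_abs]; exact habsx)
      rw [hzx] at h6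
      calc ‖(z ^ n - ((x:ℝ):ℂ) ^ n)‖ ≤ (n:ℝ) * r ^ (n-1) * |y| := h6
        _ ≤ (n:ℝ) * r ^ (n-1) * (ε * r) := by
            apply mul_le_mul_of_nonneg_left hy (by positivity)
        _ = (n:ℝ) * ε * (r ^ (n-1) * r) := by ring
        _ = (n:ℝ) * ε * r ^ n := by
            congr 1
            rw [← pow_succ]
            congr 1
            omega
    set w : ℂ := z ^ n with hwdef
    clear_value w
    have hwim : |w.im| ≤ (n:ℝ) * ε * r ^ n := by
      have h7 : w.im = (w - ((x:ℝ):ℂ) ^ n).im := by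
        rw [Complex.sub_im, ← Complex.ofReal_pow, Complex.ofReal_im, sub_zero]
      rw [h7]
      exact le_trans (Complex.abs_im_le_norm _) hpow
    have hwre : r ^ n * (1 - (n:ℝ) * ε ^ 2) - (n:ℝ) * ε * r ^ n ≤ |w.re| := by
      have h8 : |w.re - x ^ n| ≤ (n:ℝ) * ε * r ^ n := by
        have h9 : w.re - x ^ n = (w - ((x:ℝ):ℂ) ^ n).re := by
          rw [Complex.sub_re, ← Complex.ofReal_pow, Complex.ofReal_re]
        rw [h9]
        exact le_trans (Complex.abs_re_le_norm _) hpow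
      have h10 : |x ^ n| - |w.re| ≤ |x ^ n - w.re| := abs_sub_abs_le_abs_sub _ _
      rw [abs_sub_comm] at h10
      have h11 : |x ^ n| = |x| ^ n := abs_pow x n
      linarith [hxn]
    have hwabs : ‖w‖ = r ^ n := by rw [hwdef, norm_pow, habsz]
    have hwre' : |w.re| ≤ r ^ n := by
      calc |w.re| ≤ ‖w‖ := Complex.abs_re_le_norm w
        _ = r ^ n := hwabs
    have hwim' : |w.im| ≤ r ^ n := by
      calc |w.im| ≤ ‖w‖ := Complex.abs_im_le_norm w
        _ = r ^ n := hwabs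
    -- B = a * z^n
    have hBre : (a * w).re = a.re * w.re - a.im * w.im := Complex.mul_re a w
    have hBim : (a * w).im = a.re * w.im + a.im * w.re := Complex.mul_im a w
    have hR : 0 < r ^ n := pow_pos hr n
    have hnε2 : (n:ℝ) * ε ^ 2 ≤ 1/64 := by
      have e1 : (n:ℝ) * ε ^ 2 = ((n:ℝ) * ε) * ε := by ring
      have e2 : ((n:ℝ) * ε) * ε ≤ (1/64) * ε := mul_le_mul_of_nonneg_right hN64 hε.le
      rw [e1]
      linarith [hε1]
    have hBreL : ρ * r ^ n / 2 ≤ |(a * w).re| := by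
      rw [hBre]
      have h12 : |a.re * w.re| - |a.im * w.im| ≤ |a.re * w.re - a.im * w.im| :=
        abs_sub_abs_le_abs_sub _ _
      rw [abs_mul, abs_mul, ← hρdef] at h12
      have t1 : ρ * (r ^ n * (1 - (n:ℝ) * ε ^ 2) - (n:ℝ) * ε * r ^ n) ≤ ρ * |w.re| :=
        mul_le_mul_of_nonneg_left hwre hρ.le
      have t2 : |a.im| * |w.im| ≤ K * ((n:ℝ) * ε * r ^ n) :=
        mul_le_mul haim hwim (abs_nonneg _) hK.le
      have t3 : K * ((n:ℝ) * ε * r ^ n) = ρ * r ^ n / 64 := by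
        rw [show K * ((n:ℝ) * ε * r ^ n) = K * ((n:ℝ) * ε) * r ^ n by ring, hKN]
        ring
      rw [t3] at t2
      have u4 : ρ * r ^ n * (33/64 : ℝ)
          ≤ ρ * r ^ n * (1 - (n:ℝ) * ε ^ 2 - (n:ℝ) * ε) :=
        mul_le_mul_of_nonneg_left (by linarith [hnε2, hN64]) (mul_pos hρ hR).le
      linarith [t1, t2, h12, u4]
    have hBimU : |(a * w).im| ≤ K * r ^ n := by
      calc |(a * w).im| ≤ ‖a * w‖ := Complex.abs_im_le_norm _
        _ = ‖a‖ * r ^ n := by rw [norm_mul, hwabs]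
        _ ≤ K * r ^ n := mul_le_mul_of_nonneg_right habsaK hR.le
    -- F real and imaginary parts
    have hz2re : (z ^ 2).re = x ^ 2 - y ^ 2 := by
      rw [pow_two, Complex.mul_re, hxdef, hydef]; ring
    have hz2im : (z ^ 2).im = 2 * x * y := by
      rw [pow_two, Complex.mul_im, hxdef, hydef]; ring
    have hF1 : F.re = (1 - s) * (x ^ 2 - y ^ 2) + s := by
      rw [hFdef, Complex.add_re, Complex.mul_re, Complex.sub_re, Complex.sub_im,
        Complex.one_re, Complex.one_im, Complex.ofReal_re, Complex.ofReal_im, hz2re, hz2im]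
      ring
    have hF2 : F.im = (1 - s) * (2 * x * y) := by
      rw [hFdef, Complex.add_im, Complex.mul_im, Complex.sub_re, Complex.sub_im,
        Complex.one_re, Complex.one_im, Complex.ofReal_re, Complex.ofReal_im, hz2re, hz2im]
      ring
    clear_value F
    have hε214 : ε ^ 2 ≤ 1/4 := by
      rw [pow_two]
      have h15 : ε * ε ≤ (1/128 : ℝ) * (1/128 : ℝ) :=
        mul_le_mul hε1 hε1 hε.le (by norm_num)
      linarith
    have hF1L : (1 - s) * r ^ 2 / 2 + s ≤ F.re := by
      rw [hF1]
      have u3 : r ^ 2 / 2 ≤ x ^ 2 - y ^ 2 := by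
        linarith [mul_le_mul_of_nonneg_right hε214 (sq_nonneg r), hxy, hy2]
      linarith [mul_le_mul_of_nonneg_left u3 (by linarith : (0:ℝ) ≤ 1 - s)]
    have hF1nn : 0 ≤ F.re := by
      have := mul_nonneg (by linarith : (0:ℝ) ≤ 1 - s) (sq_nonneg r)
      linarith [hF1L]
    have hF2U : |F.im| ≤ 2 * ε * ((1 - s) * r ^ 2) := by
      rw [hF2, abs_mul, _root_.abs_of_nonneg (by linarith : (0:ℝ) ≤ 1 - s)]
      have u4 : |2 * x * y| ≤ 2 * r * (ε * r) := by
        rw [abs_mul, abs_mul]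
        have : |(2:ℝ)| = 2 := by norm_num
        rw [this]
        have := mul_le_mul habsx hy (abs_nonneg y) hr.le
        linarith
      calc (1 - s) * |2 * x * y| ≤ (1 - s) * (2 * r * (ε * r)) :=
            mul_le_mul_of_nonneg_left u4 (by linarith)
        _ = 2 * ε * ((1 - s) * r ^ 2) := by ring
    -- the real-part equation
    have hzero : (a * w).re * F.re = (a * w).im * F.im := by
      have h13 : (a * w * F).re = (a * w).re * F.re - (a * w).im * F.im :=
        Complex.mul_re _ _
      have h14 : (a * w * F).re = 0 := hReA
      linarith [h13 ▸ h14, h14]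
    have hchain : ρ * r ^ n / 2 * ((1 - s) * r ^ 2 / 2 + s)
        ≤ K * r ^ n * (2 * ε * ((1 - s) * r ^ 2)) := by
      calc ρ * r ^ n / 2 * ((1 - s) * r ^ 2 / 2 + s)
          ≤ |(a * w).re| * F.re := by
            apply mul_le_mul hBreL hF1L _ (abs_nonneg _)
            have := mul_nonneg (by linarith : (0:ℝ) ≤ 1 - s) (sq_nonneg r)
            linarith
        _ = |(a * w).re * F.re| := by rw [abs_mul, _root_.abs_of_nonneg hF1nn]
        _ = |(a * w).im * F.im| := by rw [hzero]
        _ ≤ |(a * w).im| * |F.im| := by rw [abs_mul]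
        _ ≤ K * r ^ n * (2 * ε * ((1 - s) * r ^ 2)) := by
            apply mul_le_mul hBimU hF2U (abs_nonneg _) (by positivity)
    have hchain2 : ρ * r ^ n / 2 * ((1 - s) * r ^ 2 / 2 + s)
        ≤ ρ / 128 * (2 * ((1 - s) * r ^ 2) * r ^ n) := by
      have : K * r ^ n * (2 * ε * ((1 - s) * r ^ 2))
          = K * ε * (2 * ((1 - s) * r ^ 2) * r ^ n) := by ring
      rw [this] at hchain
      refine le_trans hchain (mul_le_mul_of_nonneg_right hKε ?_)
      exact mul_nonneg (mul_nonneg (by norm_num)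
        (mul_nonneg (by linarith : (0:ℝ) ≤ 1 - s) (sq_nonneg r))) hR.le
    -- final contradiction
    have m1 : 0 ≤ ρ * r ^ n * ((1 - s) * r ^ 2) :=
      mul_nonneg (mul_pos hρ hR).le (mul_nonneg (by linarith) (sq_nonneg r))
    have m2 : 0 ≤ ρ * r ^ n * s := mul_nonneg (mul_pos hρ hR).le hs0
    have hQ0 : ρ * r ^ n * s = 0 := le_antisymm (by linarith [hchain2, m1]) m2
    have hP0 : ρ * r ^ n * ((1 - s) * r ^ 2) = 0 :=
      le_antisymm (by linarith [hchain2, m2]) m1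
    have hs0' : s = 0 := by
      rcases mul_eq_zero.mp hQ0 with h | h
      · exact absurd h (mul_pos hρ hR).ne'
      · exact h
    rw [hs0'] at hP0
    have hfin : ρ * r ^ n * r ^ 2 = 0 := by rw [← hP0]; ring
    exact absurd hfin (by positivity)

lemma aux_slitPlane {u v : ℂ} (hu : u ≠ 0) (hv : v ≠ 0)
    (h : ∀ s : ℝ, 0 ≤ s → s ≤ 1 → (1 - (s:ℂ)) * u + s * v ≠ 0) :
    u / v ∈ Complex.slitPlane := by
  rw [Complex.mem_slitPlane_iff]
  by_contra hc
  push_neg at hc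
  obtain ⟨hre, him⟩ := hc
  set w := u / v with hw
  have hwne : w ≠ 0 := div_ne_zero hu hv
  have hweq : w = (w.re : ℂ) := by
    apply Complex.ext <;> simp [him]
  have hrelt : w.re < 0 := by
    rcases lt_or_eq_of_le hre with h' | h'
    · exact h'
    · exact absurd (by rw [hweq, h']; simp) hwne
  have huv : u = (w.re : ℂ) * v := by
    rw [← hweq, hw, div_mul_cancel₀ _ hv]
  set l : ℝ := -w.re with hl
  have hl0 : 0 < l := by simpa [hl] using hrelt
  have h1l : (0:ℝ) < 1 + l := by linarith
  apply h (l / (1 + l)) (by positivity) (by rw [div_le_one h1l]; linarith)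
  rw [huv]
  have hwre : (w.re : ℂ) = -(l : ℂ) := by rw [hl]; push_cast; ring
  have hs : ((1 - l/(1+l)) * (-l) + l/(1+l) : ℝ) = 0 := by field_simp; ring
  calc (1 - ((l/(1+l) : ℝ):ℂ)) * ((w.re:ℂ) * v) + ((l/(1+l) : ℝ):ℂ) * v
      = (((1 - l/(1+l)) * (-l) + l/(1+l) : ℝ):ℂ) * v := by rw [hwre]; push_cast; ring
    _ = 0 := by rw [hs]; simp

lemma aux_transfer (f h : ℂ → ℂ) (z0 : ℂ) (r : ℝ) (m : ℤ)
    (hf : Continuous f) (hh : Continuous h)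
    (hne : ∀ t : ℝ, h (z0 + r * Complex.exp (Complex.I * t)) ≠ 0)
    (hslit : ∀ t : ℝ, f (z0 + r * Complex.exp (Complex.I * t)) /
        h (z0 + r * Complex.exp (Complex.I * t)) ∈ Complex.slitPlane)
    (hw : WindingOn h z0 r m) : WindingOn f z0 r m := by
  obtain ⟨θ, hθc, hθv, hθd⟩ := hw
  set c : ℝ → ℂ := fun t => z0 + r * Complex.exp (Complex.I * t) with hc
  have hcc : Continuous c := by
    continuity
  set q : ℝ → ℂ := fun t => f (c t) / h (c t) with hq
  have hqc : Continuous q := (hf.comp hcc).div (hh.comp hcc) (fun t => hne t)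
  have hqarg : Continuous fun t => (q t).arg := by
    rw [continuous_iff_continuousAt]
    intro t
    exact ContinuousAt.comp (x := t) (g := Complex.arg) (f := q)
      (Complex.continuousAt_arg (hslit t)) hqc.continuousAt
  refine ⟨fun t => θ t + (q t).arg, hθc.add hqarg.continuousOn, ?_, ?_⟩
  · intro t ht
    have hval := hθv t ht
    have hfq : f (z0 + r * Complex.exp (Complex.I * t)) =
        q t * h (z0 + r * Complex.exp (Complex.I * t)) := (div_mul_cancel₀ _ (hne t)).symm
    rw [hfq, norm_mul]
    have hexp : Complex.exp (Complex.I * ((θ t + (q t).arg : ℝ) : ℂ)) =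
        Complex.exp ((q t).arg * Complex.I) * Complex.exp (Complex.I * (θ t : ℝ)) := by
      rw [← Complex.exp_add]; push_cast; ring_nf
    rw [hexp]
    conv_lhs => rw [← Complex.norm_mul_exp_arg_mul_I (q t), hval]
    push_cast
    ring
  · have hcper : c (2 * Real.pi) = c 0 := by
      rw [hc]
      simp only
      congr 1
      congr 1
      push_cast
      rw [mul_zero, Complex.exp_zero]
      rw [show Complex.I * (2 * Real.pi : ℂ) = 2 * Real.pi * Complex.I by ring]
      exact Complex.exp_two_pi_mul_I
    have : q (2 * Real.pi) = q 0 := by rw [hq]; simp only; rw [hcper]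
    simp only [this]
    push_cast
    linarith [hθd]


theorem index_power_reduction (n : ℕ) (hn : 2 ≤ n) (a : ℂ) (hre : a.re ≠ 0)
    (g gt : ℂ → ℂ)
    (hg : ∀ z, g z = a * z ^ (n + 2) + z - (starRingEnd ℂ) z)
    (hgt : ∀ z, gt z = a * z ^ n + z - (starRingEnd ℂ) z) :
    ∀ m : ℤ, HasIndex g 0 m ↔ HasIndex gt 0 m := by
  intro m
  have hgc : Continuous g := by
    have e : g = fun z => a * z ^ (n + 2) + z - (starRingEnd ℂ) z := funext hg
    rw [e]
    exact ((continuous_const.mul (continuous_pow _)).add continuous_id).sub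
      Complex.continuous_conj
  have hgtc : Continuous gt := by
    have e : gt = fun z => a * z ^ n + z - (starRingEnd ℂ) z := funext hgt
    rw [e]
    exact ((continuous_const.mul (continuous_pow _)).add continuous_id).sub
      Complex.continuous_conj
  obtain ⟨r0, hr0, hr01, hkey⟩ := aux_nonvanish n hn a hre
  have habsc : ∀ r : ℝ, 0 < r → ∀ t : ℝ,
      ‖((0:ℂ) + r * Complex.exp (Complex.I * t))‖ = r := by
    intro r hr t
    rw [zero_add, norm_mul, Complex.norm_real, Complex.norm_exp]
    simp [Complex.mul_re, abs_of_pos hr]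
  have key : ∀ r : ℝ, 0 < r → r < r0 → ∀ z : ℂ, ‖z‖ = r →
      (g z ≠ 0 ∧ gt z ≠ 0) ∧
      (g z / gt z ∈ Complex.slitPlane ∧ gt z / g z ∈ Complex.slitPlane) := by
    intro r hr hrlt z habs
    have hcomb : ∀ s : ℝ, 0 ≤ s → s ≤ 1 → (1 - (s:ℂ)) * g z + s * gt z ≠ 0 := by
      intro s hs0 hs1
      have e : (1 - (s:ℂ)) * g z + s * gt z
          = a * z ^ n * ((1 - (s:ℂ)) * z ^ 2 + s) + (z - (starRingEnd ℂ) z) := by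
        rw [hg z, hgt z, pow_add]; ring
      rw [e]
      exact hkey r hr hrlt z habs s hs0 hs1
    have hgne : g z ≠ 0 := by
      have h0 := hcomb 0 le_rfl zero_le_one
      simpa using h0
    have hgtne : gt z ≠ 0 := by
      have h1 := hcomb 1 zero_le_one le_rfl
      simpa using h1
    have hcomb' : ∀ s : ℝ, 0 ≤ s → s ≤ 1 → (1 - (s:ℂ)) * gt z + s * g z ≠ 0 := by
      intro s hs0 hs1
      have h2 := hcomb (1 - s) (by linarith) (by linarith)
      have e2 : (1 - ((1 - s : ℝ):ℂ)) * g z + ((1 - s : ℝ):ℂ) * gt z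
          = (1 - (s:ℂ)) * gt z + s * g z := by push_cast; ring
      rw [e2] at h2
      exact h2
    exact ⟨⟨hgne, hgtne⟩, aux_slitPlane hgne hgtne hcomb, aux_slitPlane hgtne hgne hcomb'⟩
  constructor
  · rintro ⟨r1, hr1pos, hw⟩
    refine ⟨min r0 r1, lt_min hr0 hr1pos, fun r hr hrlt => ?_⟩
    have hrr0 : r < r0 := lt_of_lt_of_le hrlt (min_le_left _ _)
    have hwg := hw r hr (lt_of_lt_of_le hrlt (min_le_right _ _))
    exact aux_transfer gt g 0 r m hgtc hgc
      (fun t => ((key r hr hrr0 _ (habsc r hr t)).1).1)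
      (fun t => ((key r hr hrr0 _ (habsc r hr t)).2).2) hwg
  · rintro ⟨r1, hr1pos, hw⟩
    refine ⟨min r0 r1, lt_min hr0 hr1pos, fun r hr hrlt => ?_⟩
    have hrr0 : r < r0 := lt_of_lt_of_le hrlt (min_le_left _ _)
    have hwgt := hw r hr (lt_of_lt_of_le hrlt (min_le_right _ _))
    exact aux_transfer g gt 0 r m hgc hgtc
      (fun t => ((key r hr hrr0 _ (habsc r hr t)).1).2)
      (fun t => ((key r hr hrr0 _ (habsc r hr t)).2).1) hwgt
end

section
/- For n ≥ 2, the nonzero solutions of i z^n + z − conj(z) = 0 are exactly the n−1 points z_k = ρ_k e^{i k π/n}, where k ranges over odd k ∈ {1,…,n−1} and even k ∈ {n+1,…,2n−1}, and ρ_k^{n−1} = (−1)^{k+1} 2 sin(kπ/n). Moreover, each such zero satisfies |h'(z_k)| > 1 where h(z) = i z^n + z, i.e., all nonzero zeros are sense-preserving. -/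
open Complex

theorem zeros_of_i_zn (n : ℕ) (hn : 2 ≤ n) :
    ∀ z : ℂ, z ≠ 0 →
      ((Complex.I * z ^ n + z - (starRingEnd ℂ) z = 0 ↔
        ∃ k : ℕ, ((Odd k ∧ 1 ≤ k ∧ k ≤ n - 1) ∨ (Even k ∧ n + 1 ≤ k ∧ k ≤ 2 * n - 1)) ∧
          ∃ ρ : ℝ, 0 < ρ ∧
            ρ ^ (n - 1) = (-1 : ℝ) ^ (k + 1) * 2 * Real.sin ((k : ℝ) * Real.pi / n) ∧
            z = (ρ : ℂ) * Complex.exp (Complex.I * (((k : ℝ) * Real.pi / n : ℝ) : ℂ))) ∧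
      (Complex.I * z ^ n + z - (starRingEnd ℂ) z = 0 →
        1 < ‖deriv (fun w : ℂ => Complex.I * w ^ n + w) z‖)) := by
  intro z hz
  have hnR : (0:ℝ) < (n:ℝ) := by exact_mod_cast Nat.lt_of_lt_of_le (by norm_num) hn
  have hnC : (n:ℂ) ≠ 0 := by exact_mod_cast Nat.cast_ne_zero.mpr (show n ≠ 0 by omega)
  have hπ := Real.pi_pos
  -- key fact from the equation
  have key : Complex.I * z ^ n + z - (starRingEnd ℂ) z = 0 →
      z ^ n = ((-(2 * z.im) : ℝ) : ℂ) := by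
    intro heq
    have h1 : Complex.I * z ^ n = -(2 * z.im * Complex.I) := by
      have h2 : z - (starRingEnd ℂ) z = 2 * z.im * Complex.I := by
        rw [Complex.sub_conj]; push_cast; ring
      linear_combination heq - h2
    have h3 : Complex.I * z ^ n = Complex.I * ((-(2 * z.im) : ℝ) : ℂ) := by
      rw [h1]; push_cast; ring
    exact mul_left_cancel₀ Complex.I_ne_zero h3
  refine ⟨⟨?_, ?_⟩, ?_⟩
  · -- forward direction
    intro heq
    have hzn := key heq
    set ρ := ‖z‖ with hρdef
    have hρ : 0 < ρ := norm_pos_iff.mpr hz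
    have hρC : (ρ:ℂ) ≠ 0 := Complex.ofReal_ne_zero.mpr hρ.ne'
    set u : ℂ := z / ρ with hudef
    have hzu : z = (ρ:ℂ) * u := by rw [hudef]; field_simp
    have habsu : ‖u‖ = 1 := by
      rw [hudef, norm_div, Complex.norm_of_nonneg hρ.le, div_self hρ.ne']
    set t : ℝ := -(2 * z.im) / ρ ^ n with htdef
    have hun : u ^ n = (t : ℂ) := by
      rw [hudef, div_pow, hzn, htdef]; push_cast; ring
    have hu2n : u ^ (2 * n) = 1 := by
      have h2 : u ^ (2 * n) = ((t ^ 2 : ℝ) : ℂ) := by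
        rw [mul_comm 2 n, pow_mul, hun]; push_cast; ring
      have habs2 : ‖u ^ (2 * n)‖ = 1 := by
        rw [norm_pow, habsu, one_pow]
      rw [h2] at habs2 ⊢
      rw [Complex.norm_of_nonneg (sq_nonneg t)] at habs2
      rw [habs2]; norm_num
    haveI : NeZero (2 * n) := ⟨by omega⟩
    obtain ⟨m, hm2n, hmu⟩ :=
      (Complex.isPrimitiveRoot_exp (2 * n) (by omega)).eq_pow_of_pow_eq_one hu2n
    set θ : ℝ := (m : ℝ) * Real.pi / n with hθdef
    have huθ : u = Complex.exp (Complex.I * (θ:ℂ)) := by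
      rw [← hmu, ← Complex.exp_nat_mul]
      congr 1
      rw [hθdef]; push_cast; field_simp
    have hzform : z = (ρ:ℂ) * Complex.exp (Complex.I * (θ:ℂ)) := by rw [hzu, huθ]
    have hpow : z ^ n = (ρ:ℂ) ^ n * (-1:ℂ) ^ m := by
      rw [hzform, mul_pow, ← Complex.exp_nat_mul]
      congr 1
      have h5 : (n:ℂ) * (Complex.I * (θ:ℂ)) = (m:ℂ) * ((Real.pi:ℂ) * Complex.I) := by
        rw [hθdef]; push_cast; field_simp
      rw [h5, Complex.exp_nat_mul, Complex.exp_pi_mul_I]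
    have him : z.im = ρ * Real.sin θ := by
      rw [hzform, mul_comm Complex.I ((θ:ℝ):ℂ), Complex.exp_mul_I]
      simp [Complex.mul_im, Complex.cos_ofReal_re, Complex.cos_ofReal_im,
        Complex.sin_ofReal_re, Complex.sin_ofReal_im]
    set s := Real.sin θ with hsdef
    have hmain : ρ ^ n * (-1:ℝ) ^ m = -(2 * (ρ * s)) := by
      have h6 := hzn
      rw [hpow, him] at h6
      exact_mod_cast h6
    have hρn : ρ ^ n = ρ ^ (n - 1) * ρ := by
      rw [← pow_succ]; congr 1; omega
    have hrho : ρ ^ (n - 1) = (-1:ℝ) ^ (m + 1) * 2 * s := by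
      have h7 : ρ ^ (n - 1) * ρ = ((-1:ℝ) ^ (m + 1) * 2 * s) * ρ := by
        rcases Nat.even_or_odd m with he | ho
        · rw [he.neg_one_pow] at hmain
          rw [(he.add_one).neg_one_pow]
          rw [hρn] at hmain; linarith [hmain]
        · rw [ho.neg_one_pow] at hmain
          rw [(ho.add_one).neg_one_pow]
          rw [hρn] at hmain; linarith [hmain]
      exact mul_right_cancel₀ hρ.ne' h7
    have hpos : 0 < (-1:ℝ) ^ (m + 1) * 2 * s := hrho ▸ pow_pos hρ (n - 1)
    have hm0 : m ≠ 0 := by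
      rintro rfl
      simp [hsdef, hθdef] at hpos
    have hmn : m ≠ n := by
      rintro rfl
      have hθπ : θ = Real.pi := by rw [hθdef]; field_simp
      rw [hsdef, hθπ, Real.sin_pi, mul_zero] at hpos
      exact lt_irrefl 0 hpos
    have hsin_pos : m < n → 0 < s := by
      intro hmlt
      refine Real.sin_pos_of_pos_of_lt_pi ?_ ?_
      · rw [hθdef]
        have : 0 < (m:ℝ) := by exact_mod_cast Nat.pos_of_ne_zero hm0
        positivity
      · rw [hθdef, div_lt_iff₀ hnR]
        calc (m:ℝ) * Real.pi < (n:ℝ) * Real.pi := by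
              apply mul_lt_mul_of_pos_right _ hπ
              exact_mod_cast hmlt
          _ = Real.pi * n := by ring
    have hsin_neg : n < m → s < 0 := by
      intro hmgt
      have h8 : Real.sin (θ - Real.pi) = -s := Real.sin_sub_pi θ
      have h9 : 0 < Real.sin (θ - Real.pi) := by
        refine Real.sin_pos_of_pos_of_lt_pi ?_ ?_
        · rw [hθdef, sub_pos, lt_div_iff₀ hnR]
          calc Real.pi * n = (n:ℝ) * Real.pi := by ring
            _ < (m:ℝ) * Real.pi := by
              apply mul_lt_mul_of_pos_right _ hπ
              exact_mod_cast hmgt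
        · rw [hθdef, sub_lt_iff_lt_add, div_lt_iff₀ hnR]
          have : (m:ℝ) < 2 * n := by exact_mod_cast hm2n
          nlinarith
      linarith [h8 ▸ h9]
    rcases Nat.even_or_odd m with he | ho
    · -- m even : s < 0, so n+1 ≤ m ≤ 2n-1
      have hsneg : s < 0 := by
        rw [(he.add_one).neg_one_pow] at hpos; linarith
      have hmgt : n < m := by
        rcases lt_trichotomy m n with h | h | h
        · exact absurd (hsin_pos h) (not_lt.mpr hsneg.le)
        · exact absurd h hmn
        · exact h
      exact ⟨m, Or.inr ⟨he, by omega, by omega⟩, ρ, hρ, hrho, hzform⟩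
    · -- m odd : s > 0, so 1 ≤ m ≤ n-1
      have hspos : 0 < s := by
        rw [(ho.add_one).neg_one_pow] at hpos; linarith
      have hmlt : m < n := by
        rcases lt_trichotomy m n with h | h | h
        · exact h
        · exact absurd h hmn
        · exact absurd (hsin_neg h) (not_lt.mpr hspos.le)
      exact ⟨m, Or.inl ⟨ho, by omega, by omega⟩, ρ, hρ, hrho, hzform⟩
  · -- backward direction
    rintro ⟨k, hk, ρ, hρ, hrho, rfl⟩
    set θ : ℝ := (k : ℝ) * Real.pi / n with hθdef
    set s := Real.sin θ with hsdef
    have hρn : ρ ^ n = ρ ^ (n - 1) * ρ := by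
      rw [← pow_succ]; congr 1; omega
    have hodd : (-1:ℝ) ^ k * (-1:ℝ) ^ (k + 1) = -1 := by
      rw [← pow_add]
      exact Odd.neg_one_pow ⟨k, by ring⟩
    have hr : ρ ^ n * (-1:ℝ) ^ k + 2 * ρ * s = 0 := by
      rw [hρn, hrho]
      linear_combination (2 * ρ * s) * hodd
    have hpow : ((ρ:ℂ) * Complex.exp (Complex.I * (θ:ℂ))) ^ n = (ρ:ℂ) ^ n * (-1:ℂ) ^ k := by
      rw [mul_pow, ← Complex.exp_nat_mul]
      congr 1
      have h5 : (n:ℂ) * (Complex.I * (θ:ℂ)) = (k:ℂ) * ((Real.pi:ℂ) * Complex.I) := by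
        rw [hθdef]; push_cast; field_simp
      rw [h5, Complex.exp_nat_mul, Complex.exp_pi_mul_I]
    have hconj : (starRingEnd ℂ) ((ρ:ℂ) * Complex.exp (Complex.I * (θ:ℂ)))
        = (ρ:ℂ) * Complex.exp (-(Complex.I * (θ:ℂ))) := by
      rw [map_mul, Complex.conj_ofReal, ← Complex.exp_conj]
      congr 2
      simp
    have hexp : Complex.exp (Complex.I * (θ:ℂ)) - Complex.exp (-(Complex.I * (θ:ℂ)))
        = 2 * (s:ℂ) * Complex.I := by
      rw [mul_comm Complex.I ((θ:ℝ):ℂ)]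
      have h1 : -(((θ:ℝ):ℂ) * Complex.I) = ((-θ : ℝ):ℂ) * Complex.I := by push_cast; ring
      rw [h1, Complex.exp_mul_I, Complex.exp_mul_I]
      rw [Complex.ofReal_neg, Complex.cos_neg, Complex.sin_neg]
      rw [hsdef, Complex.ofReal_sin]
      ring
    have hrC : (ρ:ℂ) ^ n * (-1:ℂ) ^ k + 2 * (ρ:ℂ) * (s:ℂ) = 0 := by
      exact_mod_cast congrArg (Complex.ofReal) hr
    rw [hpow, hconj]
    calc Complex.I * ((ρ:ℂ) ^ n * (-1:ℂ) ^ k) + (ρ:ℂ) * Complex.exp (Complex.I * (θ:ℂ))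
          - (ρ:ℂ) * Complex.exp (-(Complex.I * (θ:ℂ)))
        = Complex.I * ((ρ:ℂ) ^ n * (-1:ℂ) ^ k)
            + (ρ:ℂ) * (Complex.exp (Complex.I * (θ:ℂ)) - Complex.exp (-(Complex.I * (θ:ℂ)))) := by
          ring
      _ = Complex.I * ((ρ:ℂ) ^ n * (-1:ℂ) ^ k + 2 * (ρ:ℂ) * (s:ℂ)) := by rw [hexp]; ring
      _ = 0 := by rw [hrC, mul_zero]
  · -- derivative part
    intro heq
    have hzn := key heq
    have hy : z.im ≠ 0 := by
      intro h0
      apply hz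
      have hzn0 : z ^ n = 0 := by rw [hzn, h0]; simp
      exact (pow_eq_zero_iff (by omega : n ≠ 0)).mp hzn0
    have hder : deriv (fun w : ℂ => Complex.I * w ^ n + w) z
        = Complex.I * ((n:ℂ) * z ^ (n - 1)) + 1 := by
      have h1 : HasDerivAt (fun w : ℂ => Complex.I * w ^ n + w)
          (Complex.I * ((n:ℂ) * z ^ (n - 1)) + 1) z := by
        have hp := (hasDerivAt_pow n z).const_mul Complex.I
        exact hp.add (hasDerivAt_id' z)
      exact h1.deriv
    set d := Complex.I * ((n:ℂ) * z ^ (n - 1)) + 1 with hddef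
    have hz1 : z ^ (n - 1) * z = z ^ n := by
      rw [← pow_succ]; congr 1; omega
    have hdz : d * z = ((z.re : ℝ):ℂ) + (((1 - 2 * n) * z.im : ℝ):ℂ) * Complex.I := by
      calc d * z = Complex.I * (n:ℂ) * (z ^ (n - 1) * z) + z := by rw [hddef]; ring
        _ = Complex.I * (n:ℂ) * (((-(2 * z.im) : ℝ)):ℂ) + z := by rw [hz1, hzn]
        _ = ((z.re : ℝ):ℂ) + (((1 - 2 * n) * z.im : ℝ):ℂ) * Complex.I := by
            have hza : z = ((z.re : ℝ):ℂ) + ((z.im : ℝ):ℂ) * Complex.I := (Complex.re_add_im z).symm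
            push_cast
            linear_combination hza
    have habs : ‖d * z‖ ^ 2 = z.re ^ 2 + ((1 - 2 * (n:ℝ)) * z.im) ^ 2 := by
      rw [hdz, Complex.sq_norm, Complex.normSq_add_mul_I]
    have habsz : ‖z‖ ^ 2 = z.re ^ 2 + z.im ^ 2 := by
      rw [Complex.sq_norm, Complex.normSq_apply]; ring
    have hlt : ‖z‖ < ‖d * z‖ := by
      have h1 : ‖z‖ ^ 2 < ‖d * z‖ ^ 2 := by
        rw [habs, habsz]
        have hy2 : 0 < z.im ^ 2 := by positivity
        have hn3 : (2:ℝ) ≤ (n:ℝ) := by exact_mod_cast hn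
        have h2' : z.im ^ 2 < (1 - 2 * (n:ℝ)) ^ 2 * z.im ^ 2 := by
          have hfac : (0:ℝ) < ((1 - 2 * (n:ℝ)) ^ 2 - 1) := by nlinarith
          nlinarith [mul_pos hfac hy2]
        nlinarith [h2']
      exact lt_of_pow_lt_pow_left₀ 2 (norm_nonneg _) h1
    rw [norm_mul] at hlt
    rw [hder]
    exact (lt_mul_iff_one_lt_left (norm_pos_iff.mpr hz)).mp hlt
end
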